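/- arXiv:2501.07514 — 3 statements merged into one kernel-verified Lean document; each statement's English description precedes it below -/
import Mathlib

section
/- With the setup of the Partial Ranking representation (products 1..J inspected in order, product h ≤ J purchased, products J+1..M uninspected, core value y = min(u_h, z_J)): if any one of the four Partial Ranking conditions — (1) z_1 ≥ ... ≥ z_J, (2) u_h ≤ z_J when h < J, (3) u_j ≤ y for j ≤ J, j ≠ h, (4) z_k ≤ y for J < k ≤ M — is violated (i.e., the corresponding inequality fails strictly), then at least one of Weitzman's Optimal Search Rules (Optimal Ranking, Optimal Continuing, Optimal Stopping, Optimal Purchasing) is violated. -/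
/-- **Necessity direction of the Partial Ranking representation.**
If any one of the four Partial Ranking conditions is violated, then at least
one of Weitzman's Optimal Search Rules is violated. -/
theorem partial_ranking_violation_implies_rule_violation
    (J M h : ℕ) (hJ : 1 ≤ J) (hh : 1 ≤ h) (hhJ : h ≤ J) (hJM : J ≤ M)
    (z u : ℕ → ℝ) (y : ℝ) (hy : y = min (u h) (z J))
    (hviol : ¬ ((∀ j, 1 ≤ j → j < J → z j ≥ z (j + 1)) ∧
                (h < J → u h ≤ z J) ∧
                (∀ j, 1 ≤ j → j ≤ J → j ≠ h → u j ≤ y) ∧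
                (∀ k, J < k → k ≤ M → z k ≤ y))) :
    ¬ ((∀ j k, 1 ≤ j → j ≤ J → j < k → k ≤ M → z j ≥ z k) ∧
       (∀ j, 1 ≤ j → j ≤ J → ∀ ℓ', 1 ≤ ℓ' → ℓ' < j →
          ∃ ℓ, j ≤ ℓ ∧ ℓ ≤ M ∧ z ℓ ≥ u ℓ') ∧
       (∀ k, J < k → k ≤ M → ∃ j, 1 ≤ j ∧ j ≤ J ∧ u j ≥ z k) ∧
       (∀ j, 1 ≤ j → j ≤ J → u h ≥ u j)) := by
  rintro ⟨R1, R2, R3, R4⟩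
  apply hviol
  -- helper: for any j' with 1 ≤ j' < J, u j' ≤ z J
  have key : ∀ j', 1 ≤ j' → j' < J → u j' ≤ z J := by
    intro j' h1 h2
    obtain ⟨ℓ, hℓ1, hℓ2, hℓ3⟩ := R2 J hJ le_rfl j' h1 h2
    rcases eq_or_lt_of_le hℓ1 with heq | hlt
    · rw [heq]; exact hℓ3
    · exact le_trans hℓ3 (R1 J ℓ hJ le_rfl hlt hℓ2)
  have cond2 : h < J → u h ≤ z J := fun hlt => key h hh hlt
  refine ⟨?_, cond2, ?_, ?_⟩
  · intro j h1 h2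
    exact R1 j (j + 1) h1 (le_of_lt h2) (Nat.lt_succ_self j)
      (le_trans (Nat.succ_le_of_lt h2) hJM)
  · intro j h1 h2 hne
    rw [hy]
    refine le_min (R4 j h1 h2) ?_
    rcases eq_or_lt_of_le h2 with heq | hlt
    · -- j = J, so h < J since h ≠ j
      subst heq
      have hhlt : h < j := lt_of_le_of_ne hhJ (Ne.symm hne)
      exact le_trans (R4 j h1 le_rfl) (cond2 hhlt)
    · exact key j h1 hlt
  · intro k hk1 hk2
    obtain ⟨j, hj1, hj2, hj3⟩ := R3 k hk1 hk2
    rw [hy]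
    exact le_min (le_trans hj3 (R4 j hj1 hj2)) (R1 J k hJ le_rfl hk1 hk2)
end

section
/- Suppose consumer i's inspected set S ⊆ M and purchase h ∈ S are observed but the inspection order is entirely unobserved (Independence and Invariance hold, no ties). Then the search process is consistent with optimality (the Gittins index policy) only if: (a) w_h > u_j for all j ∈ S \ {h}; (b) z_j > w_h for all j ∈ S \ {h}; and (c) w_h > z_k for all k ∈ M \ S, where w_h = min(z_h, u_h). Conversely, if (a), (b), (c) hold then there exists an inspection order of S under which the full Weitzman Optimal Search Rules are satisfied (e.g., inspect products of S in descending order of z, ending with h if z_h is smallest, and purchase h). -/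
/-- Weitzman's Optimal Search Rules for a realized inspection order `r`
(a duplicate-free list enumerating the inspected set `S`) with purchase `h`,
given reservation values `z` and purchase values `u` (all pairwise distinct):
inspections proceed in strictly descending reservation-value order, every
inspected product has a larger reservation value than every uninspected one
(Optimal Ranking); every revealed purchase value is below the reservation
value of each later-inspected product (Optimal Continuing); the maximum
revealed purchase value exceeds every uninspected reservation value (Optimal
Stopping); and `h` has the largest revealed purchase value (Optimal
Purchasing). -/
def WeitzmanOSR {n : ℕ} (z u : Fin n → ℝ) (S : Finset (Fin n)) (h : Fin n)
    (r : List (Fin n)) : Prop :=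
  r.Nodup ∧ r.toFinset = S ∧
  (∀ i j : Fin r.length, i < j → z (r.get j) < z (r.get i)) ∧
  (∀ i : Fin r.length, ∀ k, k ∉ S → z k < z (r.get i)) ∧
  (∀ i ℓ : Fin r.length, ℓ < i → u (r.get ℓ) < z (r.get i)) ∧
  (∀ k, k ∉ S → ∃ j ∈ S, z k < u j) ∧
  (∀ j ∈ S, j ≠ h → u j < u h)

/-- **Optimality with unobserved inspection order (Proposition 4).**
With the inspected set `S` and purchase `h ∈ S` observed but the inspection
order unobserved, and all values pairwise distinct: some inspection order of
`S` satisfies Weitzman's Optimal Search Rules **only if**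
(a) `w h > u j` for all other inspected `j`, (b) `z j > w h` for all other
inspected `j`, and (c) `w h > z k` for all uninspected `k`, where
`w h = min (z h) (u h)`; and **conversely**, if (a), (b), (c) hold then some
inspection order of `S` satisfies the full Optimal Search Rules. -/
theorem unordered_searched_set_characterization
    {n : ℕ} (z u : Fin n → ℝ) (S : Finset (Fin n)) (h : Fin n) (hhS : h ∈ S)
    (hdist : ∀ j k : Fin n, z j ≠ u k)
    (hzinj : Function.Injective z) (huinj : Function.Injective u) :
    ((∃ r : List (Fin n), WeitzmanOSR z u S h r) →
       ((∀ j ∈ S, j ≠ h → u j < min (z h) (u h)) ∧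
        (∀ j ∈ S, j ≠ h → min (z h) (u h) < z j) ∧
        (∀ k, k ∉ S → z k < min (z h) (u h)))) ∧
    (((∀ j ∈ S, j ≠ h → u j < min (z h) (u h)) ∧
      (∀ j ∈ S, j ≠ h → min (z h) (u h) < z j) ∧
      (∀ k, k ∉ S → z k < min (z h) (u h))) →
       ∃ r : List (Fin n), WeitzmanOSR z u S h r) := by
  constructor
  · rintro ⟨r, hnd, hS, hdesc, hrank, hcont, hstop, hpur⟩
    have hhr : h ∈ r := by rw [← List.mem_toFinset, hS]; exact hhS
    obtain ⟨ih, hih⟩ := List.get_of_mem hhr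
    refine ⟨?_, ?_, ?_⟩
    · intro j hjS hjh
      have hjr : j ∈ r := by rw [← List.mem_toFinset, hS]; exact hjS
      obtain ⟨ij, hij⟩ := List.get_of_mem hjr
      have hne : ij ≠ ih := by
        intro e; apply hjh; rw [← hij, e, hih]
      have hujuh : u j < u h := hpur j hjS hjh
      rcases lt_or_gt_of_ne hne with hlt | hgt
      · have h1 := hcont ih ij hlt
        rw [hij, hih] at h1
        exact lt_min h1 hujuh
      · have h1 := hcont ij ih hgt
        have h2 := hdesc ih ij hgt
        rw [hih] at h1 h2
        rw [hij] at h1 h2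
        have huz : u h < z h := lt_trans h1 h2
        rw [min_eq_right huz.le]
        exact hujuh
    · intro j hjS hjh
      have hjr : j ∈ r := by rw [← List.mem_toFinset, hS]; exact hjS
      obtain ⟨ij, hij⟩ := List.get_of_mem hjr
      have hne : ij ≠ ih := by
        intro e; apply hjh; rw [← hij, e, hih]
      rcases lt_or_gt_of_ne hne with hlt | hgt
      · have h1 := hdesc ij ih hlt
        rw [hij, hih] at h1
        exact lt_of_le_of_lt (min_le_left _ _) h1
      · have h1 := hcont ij ih hgt
        rw [hih] at h1; rw [hij] at h1
        exact lt_of_le_of_lt (min_le_right _ _) h1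
    · intro k hk
      have h1 : z k < z h := by
        have := hrank ih k hk
        rwa [hih] at this
      obtain ⟨j, hjS, hzk⟩ := hstop k hk
      have h2 : z k < u h := by
        by_cases hjh : j = h
        · rwa [hjh] at hzk
        · exact lt_trans hzk (hpur j hjS hjh)
      exact lt_min h1 h2
  · rintro ⟨ha, hb, hc⟩
    classical
    have hzuh : z h ≠ u h := hdist h h
    letI : IsTrans (Fin n) (fun a b => z b ≤ z a) := ⟨fun a b c h1 h2 => le_trans h2 h1⟩
    letI : IsAntisymm (Fin n) (fun a b => z b ≤ z a) := ⟨fun a b h1 h2 => hzinj (le_antisymm h2 h1)⟩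
    letI : IsTotal (Fin n) (fun a b => z b ≤ z a) := ⟨fun a b => le_total (z b) (z a)⟩
    set r := S.sort (fun a b => z b ≤ z a) with hr
    have hnd : r.Nodup := S.sort_nodup _
    have htf : r.toFinset = S := S.sort_toFinset _
    have hmem : ∀ i : Fin r.length, r.get i ∈ S := by
      intro i
      rw [← htf]
      exact List.mem_toFinset.2 (r.get_mem i)
    have hpw : ∀ i j : Fin r.length, i < j → z (r.get j) ≤ z (r.get i) := by
      have hs := S.pairwise_sort (fun a b => z b ≤ z a)
      rw [List.pairwise_iff_get] at hs
      exact hs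
    have hgetne : ∀ i j : Fin r.length, i ≠ j → r.get i ≠ r.get j := by
      intro i j hij e
      exact hij ((List.Nodup.get_inj_iff hnd).1 e)
    have hdesc : ∀ i j : Fin r.length, i < j → z (r.get j) < z (r.get i) := by
      intro i j hij
      exact lt_of_le_of_ne (hpw i j hij)
        (fun e => hgetne i j (ne_of_lt hij) (hzinj e).symm)
    have hminle : ∀ a ∈ S, min (z h) (u h) ≤ z a := by
      intro a haS
      by_cases hah : a = h
      · rw [hah]; exact min_le_left _ _
      · exact (hb a haS hah).le
    refine ⟨r, hnd, htf, hdesc, ?_, ?_, ?_, ?_⟩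
    · intro i k hk
      exact lt_of_lt_of_le (hc k hk) (hminle _ (hmem i))
    · intro i l hli
      set a := r.get l with haa
      set b := r.get i with hbb
      have haS : a ∈ S := hmem l
      have hbS : b ∈ S := hmem i
      have hab : a ≠ b := hgetne l i (ne_of_lt hli)
      have hba : z b < z a := hdesc l i hli
      by_cases hah : a = h
      · have hbh : b ≠ h := by rw [← hah]; exact hab.symm
        have hmb := hb b hbS hbh
        rcases min_cases (z h) (u h) with ⟨he, _⟩ | ⟨he, hlt⟩
        · rw [he] at hmb
          rw [hah] at hba
          exact absurd hmb (not_lt.2 hba.le)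
        · rw [he] at hmb
          rw [hah]
          exact hmb
      · have hua := ha a haS hah
        by_cases hbh : b = h
        · rw [hbh]
          exact lt_of_lt_of_le hua (min_le_left _ _)
        · exact lt_trans hua (hb b hbS hbh)
    · intro k hk
      exact ⟨h, hhS, lt_of_lt_of_le (hc k hk) (min_le_right _ _)⟩
    · intro j hjS hjh
      exact lt_of_lt_of_le (ha j hjS hjh) (min_le_right _ _)
end

section
/- The differencing matrix D̃ of the partial ranking representation (case h = J, i.e., the purchased product is the last inspected) has rank J + M − 1, where D̃ is the (J + 2M − 3) × (J + M) block matrix [[D̃_1, D̃_2],[D̃_3, D̃_4],[D̃_5, D̃_6]] with: D̃_1 the (J−1) × (J+1) matrix with rows e_{i+1}^T − e_{i+2}^T for i = 1..J−1 (zero first column, then bidiagonal 1/−1); D̃_2 = 0 of size (J−1) × (M−1); D̃_3 the (M−1) × (J+1) matrix with first column all −1 and zeros elsewhere; D̃_4 = I_{M−1}; D̃_5 the (M−1) × (J+1) matrix with second column all −1 and zeros elsewhere; D̃_6 = I_{M−1}. -/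
lemma sum_pair_aux {n : ℕ} (x f : Fin n → ℝ) (i j : Fin n) (hij : i ≠ j)
    (hfi : f i = 1) (hfj : f j = -1) (hf0 : ∀ c, c ≠ i → c ≠ j → f c = 0) :
    ∑ c, f c * x c = x i - x j := by
  have h : ∀ c, f c * x c =
      (if c = i then x i else 0) + (if c = j then -x j else 0) := by
    intro c
    by_cases h1 : c = i
    · subst h1; rw [if_pos rfl, if_neg hij, hfi]; ring
    · by_cases h2 : c = j
      · subst h2; rw [if_neg h1, if_pos rfl, hfj]; ring
      · rw [if_neg h1, if_neg h2, hf0 c h1 h2]; ring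
  rw [Finset.sum_congr rfl fun c _ => h c, Finset.sum_add_distrib,
    Finset.sum_ite_eq' Finset.univ i, Finset.sum_ite_eq' Finset.univ j]
  simp
  ring

/-- **Rank of the differencing matrix `D̃` (case `h = J`).**
`D̃` is the `(J + 2M − 3) × (J + M)` block matrix: the first `J − 1` rows are
`eᵢ₊₁ᵀ − eᵢ₊₂ᵀ` (zero first column, then bidiagonal `1/−1`, zeros in the last
`M − 1` columns); the next `M − 1` rows have `−1` in column `0` and an identity
block in the last `M − 1` columns (here `+1` at column `r + 2`); the final
`M − 1` rows have `−1` in column `1` and an identity block in the last `M − 1`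
columns (here `+1` at column `r + 3 − M`).  Although it has `J + 2M − 3` rows,
its rank is exactly `J + M − 1`. -/
theorem differencing_matrix_tilde_rank
    (J M : ℕ) (hJ : 1 ≤ J) (hM : 2 ≤ M) (hJM : J ≤ M)
    (D : Matrix (Fin (J + 2 * M - 3)) (Fin (J + M)) ℝ)
    (hD : ∀ (r : Fin (J + 2 * M - 3)) (c : Fin (J + M)),
      D r c =
        if (r : ℕ) < J - 1 then
          (if (c : ℕ) = (r : ℕ) + 1 then 1
           else if (c : ℕ) = (r : ℕ) + 2 then -1 else 0)
        else if (r : ℕ) < J - 1 + (M - 1) then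
          (if (c : ℕ) = 0 then -1
           else if (c : ℕ) = (r : ℕ) + 2 then 1 else 0)
        else
          (if (c : ℕ) = 1 then -1
           else if (c : ℕ) = (r : ℕ) + 3 - M then 1 else 0)) :
    D.rank = J + M - 1 := by
  -- generic row formula
  have hmv : ∀ (x : Fin (J + M) → ℝ) (r : Fin (J + 2 * M - 3)) (a b : Fin (J + M)),
      a ≠ b → D r a = 1 → D r b = -1 → (∀ c, c ≠ a → c ≠ b → D r c = 0) →
      D.mulVec x r = x a - x b := by
    intro x r a b hab ha hb h0
    have := sum_pair_aux x (D r) a b hab ha hb h0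
    simpa [Matrix.mulVec, dotProduct] using this
  -- block 1 rows
  have hE1 : ∀ (x : Fin (J + M) → ℝ) (k : ℕ) (hk : k < J - 1),
      D.mulVec x ⟨k, by omega⟩ = x ⟨k + 1, by omega⟩ - x ⟨k + 2, by omega⟩ := by
    intro x k hk
    apply hmv
    · simp [Fin.ext_iff]
    · rw [hD]; simp [hk]
    · rw [hD]; simp [hk]
    · intro c hca hcb
      rw [hD, if_pos (show ((⟨k, by omega⟩ : Fin (J + 2*M - 3)) : ℕ) < J - 1 from hk),
        if_neg, if_neg]
      · exact fun h => hcb (Fin.ext h)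
      · exact fun h => hca (Fin.ext h)
  -- block 2 rows
  have hE2 : ∀ (x : Fin (J + M) → ℝ) (r : ℕ) (h1 : J - 1 ≤ r) (h2 : r < J + M - 2),
      D.mulVec x ⟨r, by omega⟩ = x ⟨r + 2, by omega⟩ - x ⟨0, by omega⟩ := by
    intro x r h1 h2
    apply hmv
    · simp [Fin.ext_iff]
    · rw [hD]; rw [if_neg (by simpa using by omega : ¬ ((⟨r, by omega⟩ : Fin (J + 2*M - 3)) : ℕ) < J - 1),
        if_pos (by simpa using by omega : ((⟨r, by omega⟩ : Fin (J + 2*M - 3)) : ℕ) < J - 1 + (M - 1))]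
      simp
    · rw [hD]; rw [if_neg (by simpa using by omega : ¬ ((⟨r, by omega⟩ : Fin (J + 2*M - 3)) : ℕ) < J - 1),
        if_pos (by simpa using by omega : ((⟨r, by omega⟩ : Fin (J + 2*M - 3)) : ℕ) < J - 1 + (M - 1))]
      simp
    · intro c hca hcb
      rw [hD, if_neg (by simpa using by omega : ¬ ((⟨r, by omega⟩ : Fin (J + 2*M - 3)) : ℕ) < J - 1),
        if_pos (by simpa using by omega : ((⟨r, by omega⟩ : Fin (J + 2*M - 3)) : ℕ) < J - 1 + (M - 1)),
        if_neg, if_neg]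
      · exact fun h => hca (Fin.ext h)
      · exact fun h => hcb (Fin.ext h)
  -- block 3 rows
  have hE3 : ∀ (x : Fin (J + M) → ℝ) (r : ℕ) (h1 : J + M - 2 ≤ r) (h2 : r < J + 2 * M - 3),
      D.mulVec x ⟨r, by omega⟩ = x ⟨r + 3 - M, by omega⟩ - x ⟨1, by omega⟩ := by
    intro x r h1 h2
    apply hmv
    · simp [Fin.ext_iff]; omega
    · rw [hD, if_neg (by simpa using by omega : ¬ ((⟨r, by omega⟩ : Fin (J + 2*M - 3)) : ℕ) < J - 1),
        if_neg (by simpa using by omega : ¬ ((⟨r, by omega⟩ : Fin (J + 2*M - 3)) : ℕ) < J - 1 + (M - 1)),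
        if_neg (by simpa using by omega), if_pos (by simp)]
    · rw [hD, if_neg (by simpa using by omega : ¬ ((⟨r, by omega⟩ : Fin (J + 2*M - 3)) : ℕ) < J - 1),
        if_neg (by simpa using by omega : ¬ ((⟨r, by omega⟩ : Fin (J + 2*M - 3)) : ℕ) < J - 1 + (M - 1)),
        if_pos (by simp)]
    · intro c hca hcb
      rw [hD, if_neg (by simpa using by omega : ¬ ((⟨r, by omega⟩ : Fin (J + 2*M - 3)) : ℕ) < J - 1),
        if_neg (by simpa using by omega : ¬ ((⟨r, by omega⟩ : Fin (J + 2*M - 3)) : ℕ) < J - 1 + (M - 1)),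
        if_neg, if_neg]
      · exact fun h => hca (Fin.ext h)
      · exact fun h => hcb (Fin.ext h)
  -- kernel is span of the all-ones vector
  have hker : LinearMap.ker D.mulVecLin =
      Submodule.span ℝ {(fun _ => (1 : ℝ) : Fin (J + M) → ℝ)} := by
    ext x
    rw [LinearMap.mem_ker, Submodule.mem_span_singleton]
    constructor
    · intro hx
      have hx' : ∀ r, D.mulVec x r = 0 := by
        intro r; rw [show D.mulVec x = 0 from hx]; rfl
      -- chain in columns 1..J
      have hchain : ∀ k (hk : k < J), x ⟨k + 1, by omega⟩ = x ⟨1, by omega⟩ := by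
        intro k
        induction k with
        | zero => intro _; rfl
        | succ k ih =>
          intro hk
          have e := hE1 x k (by omega)
          rw [hx' _] at e
          have e2 : x ⟨k + 1 + 1, by omega⟩ = x ⟨k + 1, by omega⟩ := by
            have := sub_eq_zero.mp e.symm; exact this.symm
          rw [e2]; exact ih (by omega)
      -- columns J+1 .. J+M-1 equal column 0
      have hB : ∀ (c : ℕ) (hc1 : J + 1 ≤ c) (hc2 : c < J + M),
          x ⟨c, by omega⟩ = x ⟨0, by omega⟩ := by
        intro c hc1 hc2
        have e := hE2 x (c - 2) (by omega) (by omega)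
        rw [hx' _] at e
        have e' := sub_eq_zero.mp e.symm
        have : (⟨c - 2 + 2, by omega⟩ : Fin (J + M)) = ⟨c, by omega⟩ := by
          apply Fin.ext; simp; omega
        rw [this] at e'
        exact e'
      -- column J+1 equals column 1, hence column 0 equals column 1
      have hC : x ⟨0, by omega⟩ = x ⟨1, by omega⟩ := by
        have e := hE3 x (J + M - 2) (le_refl _) (by omega)
        rw [hx' _] at e
        have e' := sub_eq_zero.mp e.symm
        have h1 : (⟨J + M - 2 + 3 - M, by omega⟩ : Fin (J + M)) = ⟨J + 1, by omega⟩ := by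
          apply Fin.ext; simp; omega
        rw [h1] at e'
        rw [← hB (J + 1) (le_refl _) (by omega)]
        exact e'
      refine ⟨x ⟨0, by omega⟩, funext fun c => ?_⟩
      show x ⟨0, by omega⟩ * 1 = x c
      rw [mul_one]
      have hc : c = (⟨(c : ℕ), c.isLt⟩ : Fin (J + M)) := by apply Fin.ext; rfl
      by_cases h0 : (c : ℕ) = 0
      · rw [hc]; congr 1; apply Fin.ext; simp [h0]
      · by_cases h1 : (c : ℕ) ≤ J
        · have := hchain ((c : ℕ) - 1) (by omega)
          have hcc : (⟨(c : ℕ) - 1 + 1, by omega⟩ : Fin (J + M)) = c := by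
            apply Fin.ext; simp; omega
          rw [hcc] at this
          rw [this, hC]
        · have hb := hB (c : ℕ) (by omega) c.isLt
          have hcc : (⟨(c : ℕ), by omega⟩ : Fin (J + M)) = c := Fin.ext rfl
          rw [hcc] at hb
          rw [hb]
    · rintro ⟨a, rfl⟩
      rw [Matrix.mulVecLin_apply]
      funext r
      have hr : r = (⟨(r : ℕ), r.isLt⟩ : Fin (J + 2 * M - 3)) := Fin.ext rfl
      have hrlt := r.isLt
      by_cases h1 : (r : ℕ) < J - 1
      · rw [hr, hE1 _ (r : ℕ) h1]; simp
      · by_cases h2 : (r : ℕ) < J + M - 2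
        · rw [hr, hE2 _ (r : ℕ) (by omega) h2]; simp
        · rw [hr, hE3 _ (r : ℕ) (by omega) (by omega)]; simp
  -- finish with rank-nullity
  have hone : (fun _ => (1 : ℝ) : Fin (J + M) → ℝ) ≠ 0 := by
    intro h
    have := congrFun h ⟨0, by omega⟩
    simpa using this
  have hkdim : Module.finrank ℝ (LinearMap.ker D.mulVecLin) = 1 := by
    rw [hker]
    exact finrank_span_singleton hone
  have hrn := LinearMap.finrank_range_add_finrank_ker D.mulVecLin
  rw [hkdim] at hrn
  have hfull : Module.finrank ℝ (Fin (J + M) → ℝ) = J + M := by simp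
  rw [hfull] at hrn
  rw [Matrix.rank]
  omega
end
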